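/- arXiv:1709.03315 — 2 statements merged into one kernel-verified Lean document; each statement's English description precedes it below -/
import Mathlib

section
/- Let β > 0, let h ∈ L^∞(0,1), and let ψ ∈ C²((0,1)) satisfy −ψ'' − (1/r)ψ' + (β²/r²)ψ = hψ on (0,1), ψ(r) → 0 as r → 1⁻, and ∫₀¹ r (ψ'(r))² dr < ∞. Assume in addition that either (a) ψ extends continuously to r = 0 with ψ(0) = 0, or (b) ∫₀¹ ψ(r)²/r dr < ∞. Then ψ is bounded on (0,1) and ψ(r) = O(r^β) as r → 0⁺. -/
open Real MeasureTheory Metric Set Asymptotics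

noncomputable section

abbrev Plane : Type := EuclideanSpace ℝ (Fin 2)

/-- The open unit ball in the plane. -/
def unitBall : Set Plane := Metric.ball 0 1

/-- The Laplacian of a function on the plane. -/
def lap (u : Plane → ℝ) (x : Plane) : ℝ :=
  ∑ i : Fin 2,
    fderiv ℝ (fun y => fderiv ℝ u y (EuclideanSpace.single i 1)) x (EuclideanSpace.single i 1)

/-- A classical solution of the Lane–Emden problem `(E_p)` in the unit ball. -/
structure IsSolution (p : ℝ) (u : Plane → ℝ) : Prop where
  smooth : ContDiffOn ℝ 2 u unitBall
  cont : ContinuousOn u (closure unitBall)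
  eqn : ∀ x ∈ unitBall, - lap u x = |u x| ^ (p - 1) * u x
  bdry : ∀ x ∈ frontier unitBall, u x = 0

def IsRadial (u : Plane → ℝ) : Prop := ∀ x y : Plane, ‖x‖ = ‖y‖ → u x = u y

def SignChanging (u : Plane → ℝ) : Prop :=
  (∃ x ∈ unitBall, 0 < u x) ∧ (∃ x ∈ unitBall, u x < 0)

def nodalSet (u : Plane → ℝ) : Set Plane := {x | x ∈ unitBall ∧ u x ≠ 0}

/-- `u` has exactly two nodal regions. -/
def HasTwoNodalRegions (u : Plane → ℝ) : Prop :=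
  {C : Set Plane | ∃ x ∈ nodalSet u, C = connectedComponentIn (nodalSet u) x}.ncard = 2

/-- The radial solution `u_p`: radial, two nodal regions, positive at the origin. -/
def IsRadialNodalSol (p : ℝ) (u : Plane → ℝ) : Prop :=
  IsSolution p u ∧ IsRadial u ∧ HasTwoNodalRegions u ∧ 0 < u 0

def rotMap (α : ℝ) : Plane → Plane := fun x =>
  (WithLp.equiv 2 (Fin 2 → ℝ)).symm ![Real.cos α * x 0 - Real.sin α * x 1,
    Real.sin α * x 0 + Real.cos α * x 1]

def reflMap : Plane → Plane := fun x =>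
  (WithLp.equiv 2 (Fin 2 → ℝ)).symm ![x 0, -(x 1)]

/-- Invariance under the dihedral group `G_k` generated by the rotation of angle `2π/k`
and the reflection with respect to the `x`-axis. -/
def GkInvariant (k : ℕ) (u : Plane → ℝ) : Prop :=
  (∀ x, u (rotMap (2 * Real.pi / k) x) = u x) ∧ ∀ x, u (reflMap x) = u x

def energy (p : ℝ) (u : Plane → ℝ) : ℝ :=
  (1 / 2) * (∫ x in unitBall, ‖fderiv ℝ u x‖ ^ 2)
    - (1 / (p + 1)) * ∫ x in unitBall, |u x| ^ (p + 1)

/-- A least energy sign-changing `G_k`-invariant solution of `(E_p)`. -/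
def IsLeastEnergyNodalGk (p : ℝ) (k : ℕ) (u : Plane → ℝ) : Prop :=
  IsSolution p u ∧ SignChanging u ∧ GkInvariant k u ∧
    ∀ v, IsSolution p v → SignChanging v → GkInvariant k v → energy p u ≤ energy p v

/-- A smooth function compactly supported in the unit ball. -/
def IsTestFun (v : Plane → ℝ) : Prop :=
  (∀ n : ℕ, ContDiff ℝ n v) ∧ HasCompactSupport v ∧ tsupport v ⊆ unitBall

def QForm (c : Plane → ℝ) (v : Plane → ℝ) : ℝ :=
  ∫ x in unitBall, (‖fderiv ℝ v x‖ ^ 2 - c x * (v x) ^ 2)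

def IsNegSubspace (P : (Plane → ℝ) → Prop) (c : Plane → ℝ)
    (W : Submodule ℝ (Plane → ℝ)) : Prop :=
  (∀ v ∈ W, IsTestFun v ∧ P v) ∧ ∀ v ∈ W, v ≠ 0 → QForm c v < 0

/-- `n` is the maximal dimension of a subspace of test functions satisfying `P` on which the
quadratic form with zero-order coefficient `c` is negative definite. -/
def HasMorseIdx (P : (Plane → ℝ) → Prop) (c : Plane → ℝ) (n : ℕ) : Prop :=
  (∃ W : Submodule ℝ (Plane → ℝ), IsNegSubspace P c W ∧ FiniteDimensional ℝ W ∧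
    Module.finrank ℝ W = n) ∧
  ∀ W : Submodule ℝ (Plane → ℝ), IsNegSubspace P c W → FiniteDimensional ℝ W →
    Module.finrank ℝ W ≤ n

def linCoeff (p : ℝ) (u : Plane → ℝ) : Plane → ℝ := fun x => p * |u x| ^ (p - 1)

def HasMorseIndex (p : ℝ) (u : Plane → ℝ) (n : ℕ) : Prop :=
  HasMorseIdx (fun _ => True) (linCoeff p u) n

def HasRadialMorseIndex (p : ℝ) (u : Plane → ℝ) (n : ℕ) : Prop :=
  HasMorseIdx IsRadial (linCoeff p u) n

def HasKMorseIndex (k : ℕ) (p : ℝ) (u : Plane → ℝ) (n : ℕ) : Prop :=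
  HasMorseIdx (GkInvariant k) (linCoeff p u) n

def supNorm (u : Plane → ℝ) : ℝ := ⨆ x ∈ closure unitBall, |u x|

/-- A classical solution of the problem obtained linearizing `(E_p)` at `u`. -/
def IsLinearizedSol (p : ℝ) (u v : Plane → ℝ) : Prop :=
  ContDiffOn ℝ 2 v unitBall ∧ ContinuousOn v (closure unitBall) ∧
    (∀ x ∈ unitBall, - lap v x = p * |u x| ^ (p - 1) * v x) ∧
    ∀ x ∈ frontier unitBall, v x = 0

/-- The first eigenvalue `β₁(p)` of the singular weighted problem. -/
def beta1 (p : ℝ) (u : Plane → ℝ) : ℝ :=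
  sInf {t : ℝ | ∃ v : Plane → ℝ, IsTestFun v ∧ tsupport v ⊆ unitBall \ {0} ∧ v ≠ 0 ∧
    t = QForm (linCoeff p u) v / ∫ x in unitBall, (v x) ^ 2 / ‖x‖ ^ 2}

/-- `φ` is a radial Dirichlet eigenfunction of `-Δ` in the unit ball, with eigenvalue `lam`. -/
def IsRadialDirichletEigPair (lam : ℝ) (φ : Plane → ℝ) : Prop :=
  ContDiffOn ℝ 2 φ unitBall ∧ ContinuousOn φ (closure unitBall) ∧ IsRadial φ ∧
    (∃ x ∈ unitBall, φ x ≠ 0) ∧ (∀ x ∈ unitBall, - lap φ x = lam * φ x) ∧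
    ∀ x ∈ frontier unitBall, φ x = 0

def IsRadialDirichletEig (lam : ℝ) : Prop := ∃ φ, IsRadialDirichletEigPair lam φ

/-- `lam` is the second smallest radial Dirichlet eigenvalue of `-Δ` in the unit ball. -/
def IsSecondRadialEig (lam : ℝ) : Prop :=
  IsRadialDirichletEig lam ∧
    ∃ lam1, IsRadialDirichletEig lam1 ∧ lam1 < lam ∧
      ∀ mu, IsRadialDirichletEig mu → mu = lam1 ∨ lam ≤ mu

def mkPt (a b : ℝ) : Plane := (WithLp.equiv 2 (Fin 2 → ℝ)).symm ![a, b]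


open Filter intervalIntegral



-- continuous function nonpositive a.e. on open set is nonpositive everywhere
lemma aux_ae_nonpos {s : Set ℝ} (hs : IsOpen s) {f : ℝ → ℝ}
    (hf : ContinuousOn f s)
    (hae : ∀ᵐ r ∂(volume : Measure ℝ), r ∈ s → f r ≤ 0) :
    ∀ r ∈ s, f r ≤ 0 := by
  by_contra hc
  push_neg at hc
  obtain ⟨x, hx, hfx⟩ := hc
  have h1 : ∀ᶠ y in nhds x, 0 < f y :=
    ((hf.continuousAt (hs.mem_nhds hx)).eventually (eventually_gt_nhds hfx))
  have h2 : ∀ᶠ y in nhds x, 0 < f y ∧ y ∈ s :=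
    h1.and (hs.eventually_mem hx)
  obtain ⟨ε, hε, hball⟩ := Metric.eventually_nhds_iff_ball.1 h2
  have hpos : (0 : ENNReal) < volume (Metric.ball x ε) := by
    rw [Real.volume_ball]; positivity
  have hsub : Metric.ball x ε ⊆ {r | ¬ (r ∈ s → f r ≤ 0)} := by
    intro y hy
    obtain ⟨h3, h4⟩ := hball y hy
    simp only [Set.mem_setOf_eq]
    push_neg
    exact ⟨h4, h3⟩
  have : volume {r | ¬ (r ∈ s → f r ≤ 0)} = 0 := hae
  exact absurd (measure_mono_null hsub this) (by simpa using hpos.ne')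

set_option maxHeartbeats 1000000 in
lemma aux_comparison (β M δ c A : ℝ) (hβ : 0 < β) (hM : 0 ≤ M) (hδ0 : 0 < δ) (hδ1 : δ < 1)
    (φ : ℝ → ℝ)
    (hφd : ∀ x ∈ Ioo (0:ℝ) 1, HasDerivAt φ (deriv φ x) x)
    (hφdd : ∀ x ∈ Ioo (0:ℝ) 1, HasDerivAt (deriv φ) (deriv (deriv φ) x) x)
    (hφdd_cont : ContinuousOn (deriv (deriv φ)) (Ioo 0 1))
    (hb : ∀ r ∈ Ioo (0:ℝ) 1,
      -(deriv (deriv φ) r) - (1/r) * deriv φ r + (β^2/r^2) * φ r ≤ M * |φ r|)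
    (h0 : Tendsto φ (nhdsWithin 0 (Ioi 0)) (nhds 0))
    (hMδ : M * δ^2 < β^2)
    (hc : 0 ≤ c) (hc4 : M ≤ 4*c*(β+1)) (hcδ : c * δ^2 ≤ 1/2)
    (hA : 0 ≤ A) (hAδ : φ δ ≤ A * (δ^β - c * δ^(β+2))) :
    ∀ r ∈ Ioc (0:ℝ) δ, φ r ≤ A * (r^β - c * r^(β+2)) := by
  set W : ℝ → ℝ := fun y => A * (y ^ β - c * y ^ (β+2)) with hW
  set W1 : ℝ → ℝ := fun y => A * (β * y ^ (β-1) - c * ((β+2) * y ^ (β+1))) with hW1def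
  set W2 : ℝ → ℝ := fun y => A * (β * ((β-1) * y ^ (β-2)) - c * ((β+2) * ((β+1) * y ^ β)))
    with hW2def
  have hasW1 : ∀ y : ℝ, 0 < y → HasDerivAt W (W1 y) y := by
    intro y hy
    have h1 := Real.hasDerivAt_rpow_const (x := y) (p := β) (Or.inl hy.ne')
    have h2 := Real.hasDerivAt_rpow_const (x := y) (p := β+2) (Or.inl hy.ne')
    rw [show β + 2 - 1 = β + 1 by ring] at h2
    exact (h1.sub (h2.const_mul c)).const_mul A
  have hasW2 : ∀ y : ℝ, 0 < y → HasDerivAt W1 (W2 y) y := by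
    intro y hy
    have h1 := Real.hasDerivAt_rpow_const (x := y) (p := β-1) (Or.inl hy.ne')
    have h2 := Real.hasDerivAt_rpow_const (x := y) (p := β+1) (Or.inl hy.ne')
    rw [show β - 1 - 1 = β - 2 by ring] at h1
    rw [show β + 1 - 1 = β by ring] at h2
    exact ((h1.const_mul β).sub ((h2.const_mul (β+2)).const_mul c)).const_mul A
  set V : ℝ → ℝ := fun y => φ y - W y with hV
  have hVd : ∀ x ∈ Ioo (0:ℝ) 1, HasDerivAt V (deriv φ x - W1 x) x :=
    fun x hx => (hφd x hx).sub (hasW1 x hx.1)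
  have hVderiv : ∀ x ∈ Ioo (0:ℝ) 1, deriv V x = deriv φ x - W1 x :=
    fun x hx => (hVd x hx).deriv
  have hVdd : ∀ x ∈ Ioo (0:ℝ) 1, HasDerivAt (deriv V) (deriv (deriv φ) x - W2 x) x := by
    intro x hx
    have h1 : HasDerivAt (fun y => deriv φ y - W1 y) (deriv (deriv φ) x - W2 x) x :=
      (hφdd x hx).sub (hasW2 x hx.1)
    apply h1.congr_of_eventuallyEq
    exact Filter.eventuallyEq_of_mem (isOpen_Ioo.mem_nhds hx) (fun y hy => hVderiv y hy)
  have hVcont : ContinuousOn V (Ioo 0 1) :=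
    fun x hx => ((hVd x hx).continuousAt).continuousWithinAt
  -- rpow tendsto 0
  have hrpow0 : ∀ t : ℝ, 0 < t → Tendsto (fun y : ℝ => y ^ t) (nhdsWithin 0 (Ioi 0)) (nhds 0) := by
    intro t ht
    have := (Real.continuousAt_rpow_const 0 t (Or.inr ht.le)).continuousWithinAt
      (s := Ioi (0:ℝ))
    rwa [ContinuousWithinAt, Real.zero_rpow ht.ne'] at this
  have hV0 : Tendsto V (nhdsWithin 0 (Ioi 0)) (nhds 0) := by
    have hW0 : Tendsto W (nhdsWithin 0 (Ioi 0)) (nhds 0) := by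
      have := ((hrpow0 β hβ).sub ((hrpow0 (β+2) (by linarith)).const_mul c)).const_mul A
      simpa using this
    simpa using h0.sub hW0
  intro r hr
  by_contra hcon
  push_neg at hcon
  have hVr : 0 < V r := by simp only [hV, hW]; linarith
  have hr1 : r < 1 := lt_of_le_of_lt hr.2 hδ1
  -- find a
  obtain ⟨u, hu, hsub⟩ := mem_nhdsGT_iff_exists_Ioo_subset.1
    (hV0.eventually_lt_const hVr)
  set a : ℝ := min (u/2) (r/2) with ha
  have ha0 : 0 < a := lt_min (by simpa using hu) (by linarith [hr.1])
  have har : a < r := lt_of_le_of_lt (min_le_right _ _) (by linarith [hr.1])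
  have hsmall : ∀ y : ℝ, 0 < y → y ≤ a → V y < V r := by
    intro y hy1 hy2
    exact hsub ⟨hy1, lt_of_le_of_lt (hy2.trans (min_le_left _ _)) (by simpa using hu)⟩
  have haδ : Icc a δ ⊆ Ioo (0:ℝ) 1 := fun y hy => ⟨lt_of_lt_of_le ha0 hy.1,
    lt_of_le_of_lt hy.2 hδ1⟩
  obtain ⟨x, hxmem, hxmax⟩ := (isCompact_Icc (a := a) (b := δ)).exists_isMaxOn
    ⟨a, le_refl a, har.le.trans hr.2⟩ (hVcont.mono haδ)
  have hrIcc : r ∈ Icc a δ := ⟨har.le, hr.2⟩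
  have hVx : 0 < V x := lt_of_lt_of_le hVr (hxmax hrIcc)
  have hglob : ∀ y ∈ Ioc (0:ℝ) δ, V y ≤ V x := by
    intro y hy
    by_cases hya : y ≤ a
    · exact (hsmall y hy.1 hya).le.trans (hxmax hrIcc)
    · exact hxmax ⟨le_of_not_ge hya, hy.2⟩
  have hVδ : V δ ≤ 0 := by simp only [hV, hW]; linarith
  have hxδ : x < δ := lt_of_le_of_ne hxmem.2 (fun he => by rw [he] at hVx; linarith)
  have hx0 : 0 < x := lt_of_lt_of_le ha0 hxmem.1
  have hxIoo : x ∈ Ioo (0:ℝ) 1 := ⟨hx0, lt_trans hxδ hδ1⟩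
  -- local max
  have hlocmax : IsLocalMax V x := by
    apply Filter.eventually_of_mem (isOpen_Ioo.mem_nhds (⟨hx0, hxδ⟩ : x ∈ Ioo 0 δ))
    exact fun y hy => hglob y ⟨hy.1, hy.2.le⟩
  have hd0 : deriv V x = 0 := hlocmax.deriv_eq_zero
  have eq1 : deriv φ x = W1 x := by have := hVderiv x hxIoo; rw [hd0] at this; linarith
  -- second derivative nonpositive
  have hD : deriv (deriv φ) x - W2 x ≤ 0 := by
    by_contra hDc
    push_neg at hDc
    set G : ℝ → ℝ := fun y => deriv (deriv φ) y - W2 y with hG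
    have hGcont : ContinuousOn G (Ioo 0 1) := by
      apply hφdd_cont.sub
      apply ContinuousOn.mul continuousOn_const
      apply ContinuousOn.sub
      · exact (continuousOn_const.mul (continuousOn_const.mul (fun y hy =>
          (Real.continuousAt_rpow_const y _ (Or.inl hy.1.ne')).continuousWithinAt)))
      · exact (continuousOn_const.mul (continuousOn_const.mul (continuousOn_const.mul
          (fun y hy =>
          (Real.continuousAt_rpow_const y _ (Or.inl hy.1.ne')).continuousWithinAt))))
    have hU : {y | 0 < G y} ∩ Ioo 0 δ ∈ nhds x := by
      apply Filter.inter_mem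
      · exact (hGcont.continuousAt (isOpen_Ioo.mem_nhds hxIoo)).eventually
          (eventually_gt_nhds hDc)
      · exact isOpen_Ioo.mem_nhds ⟨hx0, hxδ⟩
    obtain ⟨ε', hε', hball⟩ := Metric.mem_nhds_iff.1 hU
    set ε : ℝ := ε'/2 with hε
    have hIccsub : Icc x (x+ε) ⊆ {y | 0 < G y} ∩ Ioo 0 δ := by
      intro y hy
      apply hball
      rw [Metric.mem_ball, Real.dist_eq, abs_lt]
      constructor <;> [linarith [hy.1]; linarith [hy.2]]
    have hmono1 : StrictMonoOn (deriv V) (Icc x (x+ε)) := by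
      apply strictMonoOn_of_deriv_pos (convex_Icc _ _)
      · intro y hy
        have hyI : y ∈ Ioo (0:ℝ) 1 := ⟨(hIccsub hy).2.1, lt_trans (hIccsub hy).2.2 hδ1⟩
        exact (hVdd y hyI).continuousAt.continuousWithinAt
      · intro y hy
        rw [interior_Icc] at hy
        have hy' := hIccsub (Ioo_subset_Icc_self hy)
        have hyI : y ∈ Ioo (0:ℝ) 1 := ⟨hy'.2.1, lt_trans hy'.2.2 hδ1⟩
        rw [(hVdd y hyI).deriv]
        exact hy'.1
    have hmono2 : StrictMonoOn V (Icc x (x+ε)) := by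
      apply strictMonoOn_of_deriv_pos (convex_Icc _ _)
      · intro y hy
        have hy' := hIccsub hy
        have hyI : y ∈ Ioo (0:ℝ) 1 := ⟨hy'.2.1, lt_trans hy'.2.2 hδ1⟩
        exact (hVd y hyI).continuousAt.continuousWithinAt
      · intro y hy
        rw [interior_Icc] at hy
        have h1 := hmono1 (left_mem_Icc.2 (by linarith)) (Ioo_subset_Icc_self hy) hy.1
        rw [hd0] at h1
        exact h1
    have hstep : V x < V (x + ε) :=
      hmono2 (left_mem_Icc.2 (by linarith)) (right_mem_Icc.2 (by linarith)) (by linarith)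
    have hxε := hIccsub (right_mem_Icc.2 (by linarith))
    have := hglob (x+ε) ⟨hxε.2.1, hxε.2.2.le⟩
    linarith
  -- algebra
  have hp : (0:ℝ) < x ^ β := Real.rpow_pos_of_pos hx0 β
  set p : ℝ := x ^ β with hp'
  have hx2 : (x:ℝ) ^ (2:ℝ) = x^2 := by
    rw [show (2:ℝ) = ((2:ℕ):ℝ) by norm_num, Real.rpow_natCast]
  have e1 : x ^ (β-1) = p / x := by
    rw [hp', Real.rpow_sub hx0, Real.rpow_one]
  have e2 : x ^ (β-2) = p / x^2 := by
    rw [hp', Real.rpow_sub hx0, hx2]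
  have e3 : x ^ (β+1) = p * x := by
    rw [hp', Real.rpow_add hx0, Real.rpow_one]
  have e4 : x ^ (β+2) = p * x^2 := by
    rw [hp', Real.rpow_add hx0, hx2]
  clear_value p
  have hxd2 : x^2 ≤ δ^2 := by nlinarith
  have hcx : c * x^2 ≤ 1/2 := le_trans (by nlinarith) hcδ
  have hMx : M * x^2 < β^2 := lt_of_le_of_lt (by nlinarith) hMδ
  have hVxval : V x = φ x - A*(p - c*(p*x^2)) := by
    simp only [hV, hW, e4]
    rw [← hp']
  have hVxpos : 0 < φ x - A*(p - c*(p*x^2)) := by rw [← hVxval]; exact hVx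
  have hxne : x ≠ 0 := ne_of_gt hx0
  have hφpos : 0 < φ x := by
    nlinarith [mul_nonneg (mul_nonneg hA hp.le) (by linarith : (0:ℝ) ≤ 1 - c*x^2)]
  have hbx := hb x hxIoo
  rw [abs_of_pos hφpos] at hbx
  have eq1' : deriv φ x = A * (β * (p/x) - c*((β+2)*(p*x))) := by
    rw [eq1]; simp only [hW1def]; rw [e1, e3]
  have h3 : deriv (deriv φ) x ≤ A * (β*((β-1)*(p/x^2)) - c*((β+2)*((β+1)*p))) := by
    have h4 := hD; simp only [hW2def] at h4; rw [← e2, hp']; linarith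
  set d1 : ℝ := deriv φ x
  set d2 : ℝ := deriv (deriv φ) x
  have H1 : -(d2)*x^2 - x*d1 + β^2*(φ x) ≤ M*(φ x)*x^2 := by
    have hkey : (-(d2) - (1/x)*d1 + (β^2/x^2)*(φ x)) * x^2
        = -(d2)*x^2 - x*d1 + β^2*(φ x) := by
      field_simp
    have := mul_le_mul_of_nonneg_right hbx (sq_nonneg x)
    rw [hkey] at this
    linarith
  have H2 : x * d1 = A*(β*p - c*((β+2)*(p*x^2))) := by
    rw [eq1']
    field_simp
  have H3 : d2 * x^2 ≤ A*(β*((β-1)*p) - c*((β+2)*((β+1)*(p*x^2)))) := by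
    have hkey : (A * (β*((β-1)*(p/x^2)) - c*((β+2)*((β+1)*p)))) * x^2
        = A*(β*((β-1)*p) - c*((β+2)*((β+1)*(p*x^2)))) := by
      field_simp
    have := mul_le_mul_of_nonneg_right h3 (sq_nonneg x)
    rw [hkey] at this
    linarith
  nlinarith [mul_pos (sub_pos.2 hMx) hVxpos,
    mul_nonneg (sub_nonneg.2 hc4) (mul_nonneg (mul_nonneg hA hp.le) (sq_nonneg x)),
    mul_nonneg (mul_nonneg (mul_nonneg hM hA) (mul_nonneg hc hp.le))
      (pow_nonneg hx0.le 4),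
    mul_nonneg (mul_nonneg hA hp.le) (sq_nonneg x)]

lemma aux_tendsto_zero (ψ : ℝ → ℝ)
    (hψc : ContinuousOn ψ (Ioo 0 1))
    (hd : ∀ x ∈ Ioo (0:ℝ) 1, HasDerivAt ψ (deriv ψ x) x)
    (hdc : ContinuousOn (deriv ψ) (Ioo 0 1))
    (hint : IntegrableOn (fun r => r * (deriv ψ r) ^ 2) (Ioo 0 1))
    (hint2 : IntegrableOn (fun r => (ψ r) ^ 2 / r) (Ioo 0 1)) :
    Tendsto ψ (nhdsWithin 0 (Ioi 0)) (nhds 0) := by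
  set F : ℝ → ℝ := fun r => 2 * ψ r * deriv ψ r with hF
  -- F is integrable on Ioo 0 1
  have hFmeas : AEStronglyMeasurable F (volume.restrict (Ioo (0:ℝ) 1)) := by
    apply ContinuousOn.aestronglyMeasurable _ measurableSet_Ioo
    exact (continuousOn_const.mul hψc).mul hdc
  have hFbound : ∀ r ∈ Ioo (0:ℝ) 1, ‖F r‖ ≤ (ψ r)^2 / r + r * (deriv ψ r)^2 := by
    intro r hr
    have hr0 : 0 < r := hr.1
    have habs : ‖F r‖ = 2 * |ψ r| * |deriv ψ r| := by
      rw [hF, Real.norm_eq_abs, abs_mul, abs_mul, abs_two]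
    have h1 : ‖F r‖ * r ≤ ψ r^2 + r^2 * (deriv ψ r)^2 := by
      rw [habs]
      nlinarith [sq_nonneg (|ψ r| - r * |deriv ψ r|), sq_abs (ψ r), sq_abs (deriv ψ r),
        abs_nonneg (ψ r), abs_nonneg (deriv ψ r)]
    have h2 : ‖F r‖ ≤ (ψ r^2 + r^2*(deriv ψ r)^2)/r := (le_div_iff₀ hr0).2 h1
    have h3 : (ψ r^2 + r^2*(deriv ψ r)^2)/r = ψ r^2/r + r*(deriv ψ r)^2 := by
      field_simp
    linarith
  have hFint : IntegrableOn F (Ioo (0:ℝ) 1) := by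
    apply Integrable.mono (hint2.add hint) hFmeas
    apply (ae_restrict_iff' measurableSet_Ioo).2
    apply ae_of_all
    intro r hr
    have h1 := hFbound r hr
    have h2 : (0:ℝ) ≤ (ψ r)^2 / r + r * (deriv ψ r)^2 := by
      have : (0:ℝ) < r := hr.1
      positivity
    simp only [Pi.add_apply]
    rw [Real.norm_eq_abs (ψ r ^ 2 / r + r * deriv ψ r ^ 2), abs_of_nonneg h2]
    exact h1
  have hsub1 : Ioc (0:ℝ) (1/2) ⊆ Ioo 0 1 := fun y hy => ⟨hy.1, lt_of_le_of_lt hy.2 (by norm_num)⟩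
  have hFTC : ∀ x ∈ Ioc (0:ℝ) (1/2), ψ (1/2)^2 - ψ x ^2 = ∫ t in x..(1/2:ℝ), F t := by
    intro x hx
    have hIcc : Icc x (1/2:ℝ) ⊆ Ioo 0 1 := fun y hy =>
      ⟨lt_of_lt_of_le hx.1 hy.1, lt_of_le_of_lt hy.2 (by norm_num)⟩
    rw [intervalIntegral.integral_eq_sub_of_hasDerivAt (f := fun y => ψ y ^ 2)]
    · intro t ht
      rw [uIcc_of_le hx.2] at ht
      have h2 := (hd t (hIcc ht)).fun_pow 2
      simpa [hF, mul_comm, mul_assoc, mul_left_comm] using h2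
    · apply ContinuousOn.intervalIntegrable
      rw [uIcc_of_le hx.2]
      exact ((continuousOn_const.mul (hψc.mono hIcc)).mul (hdc.mono hIcc))
  have hIccint : IntegrableOn F (Icc (0:ℝ) (1/2)) := by
    rw [integrableOn_Icc_iff_integrableOn_Ioc]
    exact hFint.mono_set hsub1
  have hprim : ContinuousOn (fun x => ∫ t in (0:ℝ)..x, F t) (Icc (0:ℝ) (1/2)) := by
    have h := intervalIntegral.continuousOn_primitive_interval
      (a := (0:ℝ)) (b := (1/2:ℝ)) (μ := volume) (f := F) ?_
    · rwa [uIcc_of_le (by norm_num : (0:ℝ) ≤ 1/2)] at h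
    · rwa [uIcc_of_le (by norm_num : (0:ℝ) ≤ 1/2)]
  have hG0 : Tendsto (fun x => ∫ t in (0:ℝ)..x, F t) (nhdsWithin 0 (Ioi 0)) (nhds 0) := by
    have h1 : Tendsto (fun x => ∫ t in (0:ℝ)..x, F t)
        (nhdsWithin 0 (Icc (0:ℝ) (1/2))) (nhds 0) := by
      have := hprim 0 (by norm_num)
      rw [ContinuousWithinAt, intervalIntegral.integral_same] at this
      exact this
    apply h1.mono_left
    have hmem : Icc (0:ℝ) (1/2) ∈ nhdsWithin (0:ℝ) (Ioi 0) :=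
      mem_of_superset (Ioc_mem_nhdsGT_of_mem (by norm_num : (0:ℝ) ∈ Ico (0:ℝ) (1/2)))
        Ioc_subset_Icc_self
    rw [nhdsWithin_restrict'' (Ioi (0:ℝ)) hmem]
    exact nhdsWithin_mono 0 inter_subset_right
  set L : ℝ := ψ (1/2)^2 - ∫ t in (0:ℝ)..(1/2:ℝ), F t with hL
  have htend : Tendsto (fun x => ψ x ^ 2) (nhdsWithin 0 (Ioi 0)) (nhds L) := by
    have h1 : Tendsto (fun x => L + ∫ t in (0:ℝ)..x, F t) (nhdsWithin 0 (Ioi 0)) (nhds L) := by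
      simpa using (tendsto_const_nhds.add hG0)
    apply h1.congr'
    apply Filter.eventuallyEq_of_mem
      (Ioc_mem_nhdsGT_of_mem (by norm_num : (0:ℝ) ∈ Ico (0:ℝ) (1/2)))
    intro x hx
    have hi1 : IntervalIntegrable F volume 0 x := by
      apply MeasureTheory.IntegrableOn.intervalIntegrable
      apply hIccint.mono_set
      rw [uIcc_of_le hx.1.le]
      exact Icc_subset_Icc le_rfl hx.2
    have hi2 : IntervalIntegrable F volume x (1/2) := by
      apply MeasureTheory.IntegrableOn.intervalIntegrable
      apply hIccint.mono_set
      rw [uIcc_of_le hx.2]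
      exact Icc_subset_Icc hx.1.le le_rfl
    have hadj := intervalIntegral.integral_add_adjacent_intervals hi1 hi2
    have hftc := hFTC x hx
    simp only [hL]
    linarith
  have hL0 : L = 0 := by
    by_contra hLne
    have hLnn : 0 ≤ L := by
      apply ge_of_tendsto htend
      exact Filter.Eventually.of_forall (fun x => sq_nonneg _)
    have hLpos : 0 < L := lt_of_le_of_ne hLnn (Ne.symm hLne)
    obtain ⟨u, hu, husub⟩ := mem_nhdsGT_iff_exists_Ioo_subset.1
      (htend.eventually_const_lt (half_lt_self hLpos))
    set ε : ℝ := min u (1/2) with hεdef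
    have hε : 0 < ε := lt_min (by simpa using hu) (by norm_num)
    have hε1 : ε ≤ 1 := le_trans (min_le_right u (1/2)) (by norm_num)
    have hsubI : Ioo (0:ℝ) ε ⊆ Ioo 0 1 := fun y hy => ⟨hy.1, lt_of_lt_of_le hy.2 hε1⟩
    have hmono : IntegrableOn (fun r => ψ r^2 / r) (Ioo 0 ε) := hint2.mono_set hsubI
    have hinv : IntegrableOn (fun r => (L/2) * r⁻¹) (Ioo 0 ε) := by
      apply Integrable.mono hmono
      · exact (measurable_const.mul measurable_inv).aestronglyMeasurable
      · apply (ae_restrict_iff' measurableSet_Ioo).2 (ae_of_all _ ?_)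
        intro r hr
        have hr0 : 0 < r := hr.1
        have h1 : L/2 < ψ r ^2 := husub ⟨hr.1, lt_of_lt_of_le hr.2 (min_le_left _ _)⟩
        have h2 : (0:ℝ) ≤ L/2 * r⁻¹ := by positivity
        have h3 : (0:ℝ) ≤ ψ r^2 / r := by positivity
        rw [Real.norm_eq_abs, Real.norm_eq_abs, abs_of_nonneg h2, abs_of_nonneg h3,
          ← div_eq_mul_inv]
        exact (div_le_div_iff_of_pos_right hr0).2 h1.le
    have hinv2 : IntegrableOn (fun r : ℝ => r ^ (-1:ℝ)) (Ioo 0 ε) := by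
      have h3 := hinv.const_mul (2/L)
      apply MeasureTheory.IntegrableOn.congr_fun h3 ?_ measurableSet_Ioo
      intro x hx
      simp only [Real.rpow_neg_one]
      have hx0 : x ≠ 0 := ne_of_gt hx.1
      have hL0 : L ≠ 0 := ne_of_gt hLpos
      field_simp
    have := (integrableOn_Ioo_rpow_iff hε).1 hinv2
    linarith
  rw [hL0] at htend
  have habs : Tendsto (fun x => |ψ x|) (nhdsWithin 0 (Ioi 0)) (nhds 0) := by
    have h1 := (Real.continuous_sqrt.tendsto 0).comp htend
    rw [Real.sqrt_zero] at h1
    apply h1.congr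
    intro x
    exact Real.sqrt_sq_eq_abs (ψ x)
  exact (tendsto_zero_iff_abs_tendsto_zero ψ).2 habs

theorem singular_ode_boundedness_and_decay (β : ℝ) (hβ : 0 < β) (h ψ : ℝ → ℝ)
    (hh : MemLp h ⊤ (volume.restrict (Set.Ioo (0 : ℝ) 1)))
    (hψ : ContDiffOn ℝ 2 ψ (Set.Ioo (0 : ℝ) 1))
    (heq : ∀ r ∈ Set.Ioo (0 : ℝ) 1,
      -(deriv (deriv ψ) r) - (1 / r) * deriv ψ r + (β ^ 2 / r ^ 2) * ψ r = h r * ψ r)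
    (hbd : Filter.Tendsto ψ (nhdsWithin 1 (Set.Iio 1)) (nhds 0))
    (hint : IntegrableOn (fun r => r * (deriv ψ r) ^ 2) (Set.Ioo (0 : ℝ) 1))
    (hcond : Filter.Tendsto ψ (nhdsWithin 0 (Set.Ioi 0)) (nhds 0) ∨
      IntegrableOn (fun r => (ψ r) ^ 2 / r) (Set.Ioo (0 : ℝ) 1)) :
    (∃ C : ℝ, ∀ r ∈ Set.Ioo (0 : ℝ) 1, |ψ r| ≤ C) ∧
      ψ =O[nhdsWithin 0 (Set.Ioi 0)] fun r => r ^ β := by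
  have hopen : IsOpen (Ioo (0:ℝ) 1) := isOpen_Ioo
  have hψc : ContinuousOn ψ (Ioo 0 1) := hψ.continuousOn
  have hd : ∀ x ∈ Ioo (0:ℝ) 1, HasDerivAt ψ (deriv ψ x) x := fun x hx =>
    ((hψ.differentiableOn (by norm_num)).differentiableAt (hopen.mem_nhds hx)).hasDerivAt
  have h1 : ContDiffOn ℝ 1 (deriv ψ) (Ioo 0 1) := hψ.deriv_of_isOpen hopen (by norm_num)
  have hdc : ContinuousOn (deriv ψ) (Ioo 0 1) := h1.continuousOn
  have hdd : ∀ x ∈ Ioo (0:ℝ) 1, HasDerivAt (deriv ψ) (deriv (deriv ψ) x) x := fun x hx =>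
    ((h1.differentiableOn one_ne_zero).differentiableAt (hopen.mem_nhds hx)).hasDerivAt
  have hddc : ContinuousOn (deriv (deriv ψ)) (Ioo 0 1) :=
    h1.continuousOn_deriv_of_isOpen hopen le_rfl
  have h0 : Tendsto ψ (nhdsWithin 0 (Ioi 0)) (nhds 0) := by
    rcases hcond with hcase | hcase
    · exact hcase
    · exact aux_tendsto_zero ψ hψc hd hdc hint hcase
  -- pointwise bound
  obtain ⟨M, hM, hbM⟩ : ∃ M : ℝ, 0 ≤ M ∧ ∀ r ∈ Ioo (0:ℝ) 1,
      |(-(deriv (deriv ψ) r) - (1 / r) * deriv ψ r + (β ^ 2 / r ^ 2) * ψ r)| ≤ M * |ψ r| := by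
    set C := (eLpNormEssSup h (volume.restrict (Ioo (0:ℝ) 1))).toReal with hCdef
    have hCnn : (0:ℝ) ≤ C := ENNReal.toReal_nonneg
    have htop : eLpNormEssSup h (volume.restrict (Ioo (0:ℝ) 1)) < ⊤ := by
      have := hh.2; rwa [eLpNorm_exponent_top] at this
    have hae : ∀ᵐ r ∂(volume.restrict (Ioo (0:ℝ) 1)), |h r| ≤ C := by
      filter_upwards [ae_le_eLpNormEssSup (f := h) (μ := volume.restrict (Ioo (0:ℝ) 1))]
        with r hr
      have h2 := ENNReal.toReal_mono htop.ne hr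
      rw [toReal_enorm, Real.norm_eq_abs] at h2
      exact h2
    refine ⟨C, hCnn, ?_⟩
    have key : ∀ r ∈ Ioo (0:ℝ) 1,
        |(-(deriv (deriv ψ) r) - (1 / r) * deriv ψ r + (β ^ 2 / r ^ 2) * ψ r)|
          - C * |ψ r| ≤ 0 := by
      apply aux_ae_nonpos hopen
      · apply ContinuousOn.sub
        · apply ContinuousOn.abs
          apply ContinuousOn.add
          · apply ContinuousOn.sub
            · exact hddc.neg
            · exact (continuousOn_const.div continuousOn_id
                (fun x hx => ne_of_gt hx.1)).mul hdc
          · exact (continuousOn_const.div (continuousOn_id.pow 2)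
              (fun x hx => pow_ne_zero 2 (ne_of_gt hx.1))).mul hψc
        · exact continuousOn_const.mul hψc.abs
      · rw [← ae_restrict_iff' measurableSet_Ioo]
        filter_upwards [hae, ae_restrict_mem measurableSet_Ioo] with r hr1 hr2
        rw [heq r hr2, abs_mul]
        nlinarith [abs_nonneg (ψ r), abs_nonneg (h r)]
    intro r hr
    have := key r hr
    linarith
  -- constants
  have hβ1 : (0:ℝ) < β + 1 := by linarith
  set c : ℝ := M / (4*(β+1)) with hcdef
  have hcnn : 0 ≤ c := by positivity
  have hc4 : M ≤ 4*c*(β+1) := by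
    have he : 4*c*(β+1) = M := by
      rw [hcdef]
      field_simp
    linarith
  set m : ℝ := min (β^2/(M+1)) (1/(2*c+2)) with hmdef
  have hmpos : 0 < m := lt_min (by positivity) (by positivity)
  set δ : ℝ := min (1/2) (Real.sqrt m) with hδdef
  have hδ0 : 0 < δ := lt_min (by norm_num) (Real.sqrt_pos.2 hmpos)
  have hδ1 : δ < 1 := lt_of_le_of_lt (min_le_left _ _) (by norm_num)
  have hδsq : δ^2 ≤ m := by
    have h1 : δ ≤ Real.sqrt m := min_le_right _ _
    calc δ^2 ≤ (Real.sqrt m)^2 := by nlinarith [hδ0]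
    _ = m := Real.sq_sqrt hmpos.le
  have hMδ : M * δ^2 < β^2 := by
    have h1 : δ^2 ≤ β^2/(M+1) := le_trans hδsq (min_le_left _ _)
    have h2 : M * δ^2 ≤ M * (β^2/(M+1)) := mul_le_mul_of_nonneg_left h1 hM
    have h3 : M * (β^2/(M+1)) < β^2 := by
      rw [mul_div_assoc']
      rw [div_lt_iff₀ (by positivity)]
      nlinarith [sq_nonneg β, mul_pos hβ hβ]
    linarith
  have hcδ : c * δ^2 ≤ 1/2 := by
    have h1 : δ^2 ≤ 1/(2*c+2) := le_trans hδsq (min_le_right _ _)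
    have h2 : c * δ^2 ≤ c * (1/(2*c+2)) := mul_le_mul_of_nonneg_left h1 hcnn
    have h3 : c * (1/(2*c+2)) ≤ 1/2 := by
      rw [mul_one_div, div_le_div_iff₀ (by positivity) (by norm_num)]
      linarith
    linarith
  have hpδ : 0 < δ^β := Real.rpow_pos_of_pos hδ0 β
  have hrpow2 : ∀ x : ℝ, 0 < x → x^(β+2) = x^β * x^2 := by
    intro x hx
    rw [Real.rpow_add hx, show (2:ℝ) = ((2:ℕ):ℝ) by norm_num, Real.rpow_natCast]
  have hwδ : 0 < δ^β - c*δ^(β+2) := by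
    rw [hrpow2 δ hδ0]
    nlinarith [hcδ, hpδ]
  set A : ℝ := |ψ δ| / (δ^β - c*δ^(β+2)) with hAdef
  have hAnn : 0 ≤ A := by positivity
  have hAmul : A * (δ^β - c*δ^(β+2)) = |ψ δ| := div_mul_cancel₀ _ (ne_of_gt hwδ)
  -- comparison for ψ
  have hcomp1 := aux_comparison β M δ c A hβ hM hδ0 hδ1 ψ hd hdd hddc
    (fun r hr => le_trans (le_abs_self _) (hbM r hr)) h0 hMδ hcnn hc4 hcδ hAnn
    (by rw [hAmul]; exact le_abs_self _)
  -- comparison for -ψ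
  have hnegfun : (deriv fun r => -ψ r) = fun r => -deriv ψ r := by
    funext x; exact deriv.neg
  have hd' : ∀ x ∈ Ioo (0:ℝ) 1, HasDerivAt (fun r => -ψ r) (deriv (fun r => -ψ r) x) x := by
    intro x hx
    rw [hnegfun]
    exact (hd x hx).neg
  have hnegfun2 : (deriv (deriv fun r => -ψ r)) = fun r => -(deriv (deriv ψ) r) := by
    rw [hnegfun]; funext x; exact deriv.neg
  have hdd' : ∀ x ∈ Ioo (0:ℝ) 1,
      HasDerivAt (deriv fun r => -ψ r) (deriv (deriv fun r => -ψ r) x) x := by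
    intro x hx
    rw [hnegfun]
    have e : deriv (fun r => -deriv ψ r) x = -(deriv (deriv ψ) x) := deriv.neg
    rw [e]
    exact (hdd x hx).neg
  have hddc' : ContinuousOn (deriv (deriv fun r => -ψ r)) (Ioo 0 1) := by
    rw [hnegfun2]; exact hddc.neg
  have hb' : ∀ r ∈ Ioo (0:ℝ) 1,
      -(deriv (deriv fun r => -ψ r) r) - (1/r) * (deriv fun r => -ψ r) r
        + (β^2/r^2) * (-ψ r) ≤ M * |-ψ r| := by
    intro r hr
    rw [hnegfun2, hnegfun]
    beta_reduce
    rw [abs_neg]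
    have h2 := hbM r hr
    have h3 := neg_abs_le (-(deriv (deriv ψ) r) - (1 / r) * deriv ψ r + (β ^ 2 / r ^ 2) * ψ r)
    linarith
  have h0' : Tendsto (fun r => -ψ r) (nhdsWithin 0 (Ioi 0)) (nhds 0) := by
    simpa using h0.neg
  have hcomp2 := aux_comparison β M δ c A hβ hM hδ0 hδ1 (fun r => -ψ r) hd' hdd' hddc'
    hb' h0' hMδ hcnn hc4 hcδ hAnn (by rw [hAmul]; exact neg_le_abs _)
  have hbound : ∀ r ∈ Ioc (0:ℝ) δ, |ψ r| ≤ A * r^β := by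
    intro r hr
    have hca := hcomp1 r hr
    have hcb : -ψ r ≤ A * (r^β - c*r^(β+2)) := hcomp2 r hr
    have hq : 0 ≤ c * r^(β+2) := mul_nonneg hcnn (Real.rpow_nonneg hr.1.le _)
    have h5 : |ψ r| ≤ A * (r^β - c*r^(β+2)) := abs_le.2 ⟨by linarith, by linarith⟩
    nlinarith [hAnn, hq]
  constructor
  · -- boundedness
    have h1 : ∀ᶠ x in nhdsWithin 1 (Iio 1), |ψ x| < 1 := by
      have h2 := hbd.eventually (eventually_abs_sub_lt 0 one_pos)
      simpa using h2
    obtain ⟨l, hl, hlsub⟩ := mem_nhdsLT_iff_exists_Ioo_subset.1 h1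
    set η : ℝ := max δ l with hη
    have hη1 : η < 1 := max_lt hδ1 hl
    have hIccsub : Icc δ η ⊆ Ioo (0:ℝ) 1 := fun y hy =>
      ⟨lt_of_lt_of_le hδ0 hy.1, lt_of_le_of_lt hy.2 hη1⟩
    obtain ⟨K, hK⟩ := (isCompact_Icc (a := δ) (b := η)).exists_bound_of_continuousOn
      (hψc.mono hIccsub)
    refine ⟨max (max (A * δ^β) K) 1, ?_⟩
    intro r hr
    rcases le_or_gt r δ with hrδ | hrδ
    · have h2 := hbound r ⟨hr.1, hrδ⟩
      have h3 : r^β ≤ δ^β := Real.rpow_le_rpow hr.1.le hrδ hβ.le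
      have h4 : A * r^β ≤ A * δ^β := mul_le_mul_of_nonneg_left h3 hAnn
      exact le_trans h2 (le_trans h4 (le_trans (le_max_left _ _) (le_max_left _ _)))
    · rcases le_or_gt r η with hrη | hrη
      · have h2 := hK r ⟨hrδ.le, hrη⟩
        rw [Real.norm_eq_abs] at h2
        exact le_trans h2 (le_trans (le_max_right _ _) (le_max_left _ _))
      · have h2 : r ∈ Ioo l 1 := ⟨lt_of_le_of_lt (le_max_right δ l) hrη, hr.2⟩
        have h3 := hlsub h2
        simp only [Set.mem_setOf_eq] at h3
        exact le_trans (le_of_lt h3) (le_max_right _ _)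
  · -- decay
    rw [Asymptotics.isBigO_iff]
    refine ⟨A, ?_⟩
    filter_upwards [Ioo_mem_nhdsGT_of_mem (⟨le_rfl, hδ0⟩ : (0:ℝ) ∈ Ico 0 δ)] with r hr
    have h2 := hbound r ⟨hr.1, hr.2.le⟩
    rw [Real.norm_eq_abs, Real.norm_eq_abs, abs_of_pos (Real.rpow_pos_of_pos hr.1 β)]
    exact h2

end
end

section
/- For every p > 1, u_p is radially nondegenerate: every radial classical solution v ∈ C²(B) ∩ C(B̄) of the linearized problem −Δv = p|u_p|^{p−1}v in B, v = 0 on ∂B, is identically zero. -/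
open Real MeasureTheory Metric Set Asymptotics

noncomputable section

namespace RadialAux

open Filter Topology


abbrev E0 : Plane := EuclideanSpace.single (0 : Fin 2) (1:ℝ)
abbrev E1 : Plane := EuclideanSpace.single (1 : Fin 2) (1:ℝ)

lemma norm_E0 : ‖E0‖ = 1 := by simp [EuclideanSpace.norm_single]

lemma norm_smul_E0 (t : ℝ) : ‖t • E0‖ = |t| := by
  rw [norm_smul, norm_E0, mul_one, Real.norm_eq_abs]

lemma mem_unitBall {t : ℝ} (h : |t| < 1) : t • E0 ∈ unitBall := by
  simpa [unitBall, mem_ball_zero_iff, norm_smul_E0] using h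

lemma norm_mix (r t : ℝ) : ‖r • E0 + t • E1‖ = Real.sqrt (r^2 + t^2) := by
  rw [EuclideanSpace.norm_eq]
  congr 1
  rw [Fin.sum_univ_two]
  simp [EuclideanSpace.single_apply, sq_abs, Real.norm_eq_abs]

lemma hasDerivAt_line (h : Plane → ℝ) {y : Plane} (hd : DifferentiableAt ℝ h y)
    (x E : Plane) (t : ℝ) (hy : x + t • E = y) :
    HasDerivAt (fun s : ℝ => h (x + s • E)) (fderiv ℝ h y E) t := by
  have hl : HasDerivAt (fun s : ℝ => x + s • E) E t := by
    simpa using ((hasDerivAt_id t).smul_const E).const_add x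
  have h2 : HasFDerivAt h (fderiv ℝ h y) (x + t • E) := hy ▸ hd.hasFDerivAt
  exact h2.comp_hasDerivAt t hl

lemma lap_radial {h : Plane → ℝ} (hs : ContDiffOn ℝ 2 h unitBall) (hrad : IsRadial h)
    {r : ℝ} (hr0 : 0 < r) (hr1 : r < 1) :
    lap h (r • E0) =
      deriv (deriv (fun t : ℝ => h (t • E0))) r + deriv (fun t : ℝ => h (t • E0)) r / r := by
  set g : ℝ → ℝ := fun t => h (t • E0) with hgdef
  have hopen : IsOpen unitBall := isOpen_ball
  have hx : r • E0 ∈ unitBall := mem_unitBall (by rwa [abs_of_pos hr0])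
  have hdiff : ∀ y ∈ unitBall, DifferentiableAt ℝ h y := fun y hy =>
    (hs.contDiffAt (hopen.mem_nhds hy)).differentiableAt two_ne_zero
  have hline : ContDiff ℝ 2 (fun t : ℝ => t • E0) := contDiff_id.smul contDiff_const
  have hmaps : MapsTo (fun t : ℝ => t • E0) (Ioo (-1:ℝ) 1) unitBall := fun t ht =>
    mem_unitBall (abs_lt.2 ⟨ht.1, ht.2⟩)
  have hgC : ContDiffOn ℝ 2 g (Ioo (-1:ℝ) 1) := hs.comp hline.contDiffOn hmaps
  have hIoo : IsOpen (Ioo (-1:ℝ) 1) := isOpen_Ioo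
  have hg1 : ∀ s ∈ Ioo (-1:ℝ) 1, HasDerivAt g (fderiv ℝ h (s • E0) E0) s := by
    intro s hs'
    have := hasDerivAt_line h (hdiff _ (hmaps hs')) 0 E0 s (by simp)
    simpa [hgdef] using this
  have hg1' : ∀ s ∈ Ioo (-1:ℝ) 1, deriv g s = fderiv ℝ h (s • E0) E0 := fun s hs' =>
    (hg1 s hs').deriv
  have hg'C : ContDiffOn ℝ 1 (deriv g) (Ioo (-1:ℝ) 1) :=
    hgC.deriv_of_isOpen hIoo (by norm_num)
  have hg2 : ∀ s ∈ Ioo (-1:ℝ) 1, HasDerivAt (deriv g) (deriv (deriv g) s) s := fun s hs' =>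
    ((hg'C.contDiffAt (hIoo.mem_nhds hs')).differentiableAt one_ne_zero).hasDerivAt
  have hFC : ContDiffOn ℝ 1 (fderiv ℝ h) unitBall := hs.fderiv_of_isOpen hopen (by norm_num)
  have hFdiff : DifferentiableAt ℝ (fderiv ℝ h) (r • E0) :=
    (hFC.contDiffAt (hopen.mem_nhds hx)).differentiableAt one_ne_zero
  have hrIoo : r ∈ Ioo (-1:ℝ) 1 := ⟨by linarith, hr1⟩
  have key : ∀ (E : Plane) (D : ℝ),
      HasDerivAt (fun t : ℝ => fderiv ℝ h (r • E0 + t • E) E) D 0 →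
      fderiv ℝ (fun y => fderiv ℝ h y E) (r • E0) E = D := by
    intro E D hD
    have happ : DifferentiableAt ℝ (fun y => fderiv ℝ h y E) (r • E0) :=
      ((ContinuousLinearMap.apply ℝ ℝ E).differentiableAt).comp _ hFdiff
    have hl : HasDerivAt (fun s : ℝ => r • E0 + s • E) E 0 := by
      simpa using ((hasDerivAt_id (0:ℝ)).smul_const E).const_add (r • E0)
    have h2 : HasFDerivAt (fun y => fderiv ℝ h y E)
        (fderiv ℝ (fun y => fderiv ℝ h y E) (r • E0)) (r • E0 + (0:ℝ) • E) := by
      have : r • E0 + (0:ℝ) • E = r • E0 := by simp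
      rw [this]; exact happ.hasFDerivAt
    have hcomp := h2.comp_hasDerivAt 0 hl
    exact (hcomp.unique hD).symm ▸ rfl
  have hrad0 : fderiv ℝ (fun y => fderiv ℝ h y E0) (r • E0) E0 = deriv (deriv g) r := by
    apply key
    have hev : (fun t : ℝ => fderiv ℝ h (r • E0 + t • E0) E0)
        =ᶠ[𝓝 (0:ℝ)] fun t => deriv g (r + t) := by
      have hmem : ∀ᶠ t in 𝓝 (0:ℝ), r + t ∈ Ioo (-1:ℝ) 1 := by
        have hc : ContinuousAt (fun t : ℝ => r + t) 0 := by fun_prop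
        exact hc.preimage_mem_nhds (hIoo.mem_nhds (by simpa using hrIoo))
      filter_upwards [hmem] with t ht
      rw [hg1' _ ht, add_smul]
    have hD : HasDerivAt (fun t : ℝ => deriv g (r + t)) (deriv (deriv g) r) 0 := by
      have hg2' : HasDerivAt (deriv g) (deriv (deriv g) r) (r + 0) := by
        simpa using hg2 r hrIoo
      have := hg2'.comp (0:ℝ) (by simpa using (hasDerivAt_id (0:ℝ)).const_add r)
      exact this.congr_deriv (by simp)
    exact hD.congr_of_eventuallyEq hev
  -- tangential direction
  set δ : ℝ := Real.sqrt (1 - r^2) with hδdef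
  have hδpos : 0 < δ := Real.sqrt_pos.2 (by nlinarith)
  set ρ : ℝ → ℝ := fun t => Real.sqrt (r^2 + t^2) with hρdef
  have hρpos : ∀ t, 0 < ρ t := fun t => Real.sqrt_pos.2 (by positivity)
  have hρ0 : ρ 0 = r := by
    simp [hρdef, Real.sqrt_sq hr0.le]
  have hρlt : ∀ t, |t| < δ → ρ t < 1 := by
    intro t ht
    have h1 : t^2 < 1 - r^2 := by
      have := pow_lt_pow_left₀ ht (abs_nonneg t) two_ne_zero
      rwa [sq_abs, Real.sq_sqrt (by nlinarith : (0:ℝ) ≤ 1 - r^2)] at this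
    have : ρ t < Real.sqrt 1 := Real.sqrt_lt_sqrt (by positivity) (by nlinarith)
    simpa using this
  have hρder : ∀ t, HasDerivAt ρ (t / ρ t) t := by
    intro t
    have hinner : HasDerivAt (fun s : ℝ => r^2 + s^2) (2*t) t := by
      simpa using (hasDerivAt_pow 2 t).const_add (r^2)
    have hpos : r^2 + t^2 ≠ 0 := by positivity
    have := (Real.hasDerivAt_sqrt hpos).comp t hinner
    refine this.congr_deriv (Eq.symm ?_)
    rw [hρdef]
    field_simp
  have hρmem : ∀ t, |t| < δ → ρ t ∈ Ioo (-1:ℝ) 1 := fun t ht =>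
    ⟨by linarith [hρpos t], hρlt t ht⟩
  have hF1 : ∀ t, |t| < δ → fderiv ℝ h (r • E0 + t • E1) E1 = deriv g (ρ t) * (t / ρ t) := by
    intro t ht
    have hnorm : ‖r • E0 + t • E1‖ = ρ t := norm_mix r t
    have hyball : r • E0 + t • E1 ∈ unitBall := by
      rw [unitBall, mem_ball_zero_iff, hnorm]; exact hρlt t ht
    have h1 : HasDerivAt (fun s : ℝ => h (r • E0 + s • E1))
        (fderiv ℝ h (r • E0 + t • E1) E1) t :=
      hasDerivAt_line h (hdiff _ hyball) (r • E0) E1 t rfl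
    have hgd : HasDerivAt g (deriv g (ρ t)) (ρ t) := by
      have h' := hg1 _ (hρmem t ht)
      rwa [← hg1' _ (hρmem t ht)] at h'
    have h2 : HasDerivAt (fun s : ℝ => g (ρ s)) (deriv g (ρ t) * (t / ρ t)) t :=
      hgd.comp t (hρder t)
    have hev : (fun s : ℝ => h (r • E0 + s • E1)) =ᶠ[𝓝 t] fun s => g (ρ s) := by
      have habs : ∀ᶠ s in 𝓝 t, |s| < δ := by
        have hc : ContinuousAt (fun s : ℝ => |s|) t := continuous_abs.continuousAt
        have := hc.preimage_mem_nhds (isOpen_Iio.mem_nhds (show |t| ∈ Iio δ from ht))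
        exact this
      filter_upwards [habs] with s hsδ
      exact hrad _ _ (by rw [norm_mix, norm_smul_E0, abs_of_pos (hρpos s)])
    exact (h2.congr_of_eventuallyEq hev).unique h1 |>.symm
  have htan : fderiv ℝ (fun y => fderiv ℝ h y E1) (r • E0) E1 = deriv g r / r := by
    apply key
    have hev : (fun t : ℝ => fderiv ℝ h (r • E0 + t • E1) E1)
        =ᶠ[𝓝 (0:ℝ)] fun t => deriv g (ρ t) * (t / ρ t) := by
      have habs : ∀ᶠ t in 𝓝 (0:ℝ), |t| < δ := by
        have hc : ContinuousAt (fun s : ℝ => |s|) 0 := continuous_abs.continuousAt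
        have := hc.preimage_mem_nhds (isOpen_Iio.mem_nhds (by simpa using hδpos))
        exact this
      filter_upwards [habs] with t ht using hF1 t ht
    have hA : HasDerivAt (fun t : ℝ => deriv g (ρ t)) (deriv (deriv g) (ρ 0) * (0 / ρ 0)) 0 :=
      (hg2 (ρ 0) (by rw [hρ0]; exact hrIoo)).comp 0 (hρder 0)
    have hC : HasDerivAt (fun t : ℝ => t / ρ t)
        ((1 * ρ 0 - 0 * (0 / ρ 0)) / (ρ 0)^2) 0 :=
      (hasDerivAt_id 0).div (hρder 0) (ne_of_gt (hρpos 0))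
    have hB := hA.mul hC
    have : HasDerivAt (fun t : ℝ => deriv g (ρ t) * (t / ρ t)) (deriv g r / r) 0 := by
      refine hB.congr_deriv (Eq.symm ?_)
      rw [hρ0]
      field_simp
      ring
    exact this.congr_of_eventuallyEq hev
  have hlap : lap h (r • E0) = fderiv ℝ (fun y => fderiv ℝ h y E0) (r • E0) E0
      + fderiv ℝ (fun y => fderiv ℝ h y E1) (r • E0) E1 := by
    simp only [lap, Fin.sum_univ_two]
  rw [hlap, hrad0, htan]

lemma ode_of_solution {c h : Plane → ℝ} (hs : ContDiffOn ℝ 2 h unitBall) (hrad : IsRadial h)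
    (heq : ∀ x ∈ unitBall, - lap h x = c x * h x) {r : ℝ} (h0 : 0 < r) (h1 : r < 1) :
    deriv (deriv (fun t : ℝ => h (t • E0))) r
      = -(deriv (fun t : ℝ => h (t • E0)) r)/r - c (r • E0) * h (r • E0) := by
  have hx : r • E0 ∈ unitBall := mem_unitBall (by rwa [abs_of_pos h0])
  have h2 := heq _ hx
  rw [lap_radial hs hrad h0 h1] at h2
  have hr' : r ≠ 0 := ne_of_gt h0
  field_simp at h2 ⊢
  linarith

lemma hasDerivAt_phi {p : ℝ} (hp : 1 < p) (t : ℝ) :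
    HasDerivAt (fun s : ℝ => |s| ^ (p - 1) * s) (p * |t| ^ (p - 1)) t := by
  rcases lt_trichotomy t 0 with ht | rfl | ht
  · have hev : (fun s : ℝ => |s| ^ (p - 1) * s) =ᶠ[𝓝 t] fun s => -((-s) ^ p) := by
      have : ∀ᶠ s in 𝓝 t, s < 0 := eventually_lt_nhds ht
      filter_upwards [this] with s hs
      rw [abs_of_neg hs, show (p:ℝ) = (p - 1) + 1 by ring,
        Real.rpow_add (by linarith : (0:ℝ) < -s), Real.rpow_one]
      ring
    have hneg : HasDerivAt (fun s : ℝ => -s) (-1 : ℝ) t := (hasDerivAt_id t).neg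
    have hrpow : HasDerivAt (fun x : ℝ => x ^ p) (p * (-t) ^ (p - 1)) (-t) :=
      Real.hasDerivAt_rpow_const (Or.inl (by linarith))
    have := (hrpow.comp t hneg).neg
    have h2 : HasDerivAt (fun s : ℝ => -((-s) ^ p)) (p * (-t) ^ (p - 1)) t := by
      refine this.congr_deriv (Eq.symm ?_)
      ring
    rw [abs_of_neg ht]
    exact h2.congr_of_eventuallyEq hev
  · rw [hasDerivAt_iff_tendsto_slope]
    have hz : p * |(0:ℝ)| ^ (p - 1) = 0 := by
      rw [abs_zero, Real.zero_rpow (by linarith : p - 1 ≠ 0), mul_zero]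
    rw [hz]
    have hev : (fun s : ℝ => |s| ^ (p - 1)) =ᶠ[𝓝[≠] (0:ℝ)] slope (fun s : ℝ => |s| ^ (p - 1) * s) 0 := by
      filter_upwards [self_mem_nhdsWithin] with s hs
      have hs' : s ≠ 0 := hs
      rw [slope_def_field]
      field_simp
      simp
    apply Tendsto.congr' hev
    have hcont : ContinuousAt (fun x : ℝ => x ^ (p - 1)) 0 :=
      Real.continuousAt_rpow_const 0 (p - 1) (Or.inr (by linarith))
    have : Tendsto (fun s : ℝ => |s| ^ (p - 1)) (𝓝 0) (𝓝 0) := by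
      have h1 : Tendsto (fun s : ℝ => |s|) (𝓝 (0:ℝ)) (𝓝 (0:ℝ)) := by
        simpa using continuous_abs.tendsto (0:ℝ)
      have := hcont.tendsto.comp h1
      simpa [Real.zero_rpow (by linarith : p - 1 ≠ 0), Function.comp_def] using this
    exact this.mono_left nhdsWithin_le_nhds
  · have hev : (fun s : ℝ => |s| ^ (p - 1) * s) =ᶠ[𝓝 t] fun s => s ^ p := by
      have : ∀ᶠ s in 𝓝 t, 0 < s := eventually_gt_nhds ht
      filter_upwards [this] with s hs
      rw [abs_of_pos hs, show (p:ℝ) = (p - 1) + 1 by ring, Real.rpow_add hs, Real.rpow_one]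
      ring
    have hrpow : HasDerivAt (fun x : ℝ => x ^ p) (p * t ^ (p - 1)) t :=
      Real.hasDerivAt_rpow_const (Or.inl (ne_of_gt ht))
    rw [abs_of_pos ht]
    exact hrpow.congr_of_eventuallyEq hev

lemma const_on_Ioo {f : ℝ → ℝ} {a b : ℝ} (hf : ∀ r ∈ Ioo a b, HasDerivAt f 0 r) :
    ∀ x ∈ Ioo a b, ∀ y ∈ Ioo a b, f x = f y := by
  have key : ∀ x ∈ Ioo a b, ∀ y ∈ Ioo a b, x ≤ y → f y = f x := by
    intro x hx y hy hxy
    have hsub : Icc x y ⊆ Ioo a b := fun z hz => ⟨lt_of_lt_of_le hx.1 hz.1, lt_of_le_of_lt hz.2 hy.2⟩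
    have hcont : ContinuousOn f (Icc x y) := fun z hz =>
      (hf z (hsub hz)).continuousAt.continuousWithinAt
    have hderiv : ∀ z ∈ Ico x y, HasDerivWithinAt f 0 (Ici z) z := fun z hz =>
      (hf z (hsub ⟨hz.1, hz.2.le⟩)).hasDerivWithinAt
    exact constant_of_has_deriv_right_zero hcont hderiv y ⟨hxy, le_rfl⟩
  intro x hx y hy
  rcases le_total x y with h | h
  · exact (key x hx y hy h).symm
  · exact key y hy x hx h

lemma backward_unique {q dq m : ℝ → ℝ} {a b C : ℝ} (ha : 0 < a) (hC : 0 ≤ C)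
    (hq : ∀ r ∈ Ico a b, HasDerivAt q (dq r) r)
    (hdq : ∀ r ∈ Ico a b, HasDerivAt dq (-(dq r)/r - m r * q r) r)
    (hm : ∀ r ∈ Ico a b, |m r| ≤ C)
    (hlim : Tendsto (fun r => q r ^ 2 + dq r ^ 2) (𝓝[<] b) (𝓝 0)) :
    ∀ r ∈ Ico a b, q r = 0 := by
  set K : ℝ := 1 + C + 2/a with hK
  set E : ℝ → ℝ := fun r => q r ^ 2 + dq r ^ 2 with hEdef
  set g : ℝ → ℝ := fun r => Real.exp (K * r) * E r with hgdef
  have hEder : ∀ r ∈ Ico a b, HasDerivAt E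
      (2 * q r * dq r + 2 * dq r * (-(dq r)/r - m r * q r)) r := by
    intro r hr
    have h1 := ((hq r hr).pow 2).add ((hdq r hr).pow 2)
    refine h1.congr_deriv (Eq.symm ?_)
    ring
  have hgder : ∀ r ∈ Ico a b, HasDerivAt g
      (Real.exp (K * r) * (K * E r + (2*q r*dq r + 2*dq r*(-(dq r)/r - m r * q r)))) r := by
    intro r hr
    have hexp : HasDerivAt (fun s : ℝ => Real.exp (K * s)) (K * Real.exp (K * r)) r := by
      have := ((hasDerivAt_id r).const_mul K).exp
      simpa [mul_comm] using this
    have := hexp.mul (hEder r hr)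
    refine this.congr_deriv (Eq.symm ?_)
    ring
  have hEnonneg : ∀ r, 0 ≤ E r := fun r => by positivity
  have hderiv_nonneg : ∀ r ∈ Ico a b,
      0 ≤ Real.exp (K * r) * (K * E r + (2*q r*dq r + 2*dq r*(-(dq r)/r - m r * q r))) := by
    intro r hr
    have hra : a ≤ r := hr.1
    have hrpos : 0 < r := lt_of_lt_of_le ha hra
    have hmr := hm r hr
    have e1 : -(E r) ≤ 2 * q r * dq r := by
      simp only [hEdef]; nlinarith [sq_nonneg (q r + dq r)]
    have hq2 : dq r ^ 2 ≤ E r := by simp only [hEdef]; nlinarith [sq_nonneg (q r)]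
    have hd1 : dq r ^ 2 / r ≤ dq r ^ 2 / a := by gcongr
    have hd2 : dq r ^ 2 / a ≤ E r / a := by gcongr
    have habs2 : 2 * (m r * (q r * dq r)) ≤ C * E r := by
      have h5 : m r * (q r * dq r) ≤ |m r| * |q r * dq r| := by
        calc m r * (q r * dq r) ≤ |m r * (q r * dq r)| := le_abs_self _
        _ = |m r| * |q r * dq r| := abs_mul _ _
      have h6 : |m r| * |q r * dq r| ≤ C * |q r * dq r| :=
        mul_le_mul_of_nonneg_right hmr (abs_nonneg _)
      have h7 : 2 * |q r * dq r| ≤ E r := by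
        simp only [hEdef]
        rw [abs_mul]
        nlinarith [sq_nonneg (|q r| - |dq r|), sq_abs (q r), sq_abs (dq r),
          abs_nonneg (q r), abs_nonneg (dq r)]
      nlinarith [abs_nonneg (q r * dq r)]
    have expand : 2*dq r*(-(dq r)/r - m r*q r)
        = -(2*(dq r^2/r)) - 2*(m r*(q r*dq r)) := by ring
    have hKE : K * E r = E r + C * E r + (2/a) * E r := by rw [hK]; ring
    have h2a : 2 * (dq r^2/a) ≤ (2/a) * E r := by
      rw [show (2:ℝ)/a * E r = 2 * (E r / a) by ring]
      linarith
    apply mul_nonneg (Real.exp_pos _).le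
    rw [expand, hKE]
    have t1 : 0 ≤ E r + 2 * q r * dq r := by linarith
    have t2 : 0 ≤ C * E r - 2 * (m r * (q r * dq r)) := by linarith
    have t3 : 0 ≤ 2 / a * E r - 2 * (dq r ^ 2 / r) := by linarith
    have hsplit : E r + C * E r + 2 / a * E r
        + (2 * q r * dq r + (-(2 * (dq r ^ 2 / r)) - 2 * (m r * (q r * dq r))))
        = (E r + 2 * q r * dq r) + (C * E r - 2 * (m r * (q r * dq r)))
          + (2 / a * E r - 2 * (dq r ^ 2 / r)) := by ring
    rw [hsplit]
    exact add_nonneg (add_nonneg t1 t2) t3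
  have hmono : MonotoneOn g (Ico a b) := by
    apply monotoneOn_of_deriv_nonneg (convex_Ico a b)
    · exact fun r hr => (hgder r hr).continuousAt.continuousWithinAt
    · intro r hr
      rw [interior_Ico] at hr
      exact ((hgder r (Ioo_subset_Ico_self hr)).differentiableAt).differentiableWithinAt
    · intro r hr
      rw [interior_Ico] at hr
      rw [(hgder r (Ioo_subset_Ico_self hr)).deriv]
      exact hderiv_nonneg r (Ioo_subset_Ico_self hr)
  have hgtends : Tendsto g (𝓝[<] b) (𝓝 0) := by
    have hexp : Tendsto (fun r : ℝ => Real.exp (K * r)) (𝓝[<] b) (𝓝 (Real.exp (K * b))) :=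
      ((Real.continuous_exp.comp (continuous_const.mul continuous_id)).tendsto b).mono_left
        nhdsWithin_le_nhds
    have := hexp.mul hlim
    simpa using this
  intro r hr
  have hgle : g r ≤ 0 := by
    apply ge_of_tendsto hgtends
    filter_upwards [Ioo_mem_nhdsLT hr.2] with y hy
    exact hmono hr ⟨hr.1.trans hy.1.le, hy.2⟩ hy.1.le
  have hE0 : E r = 0 := by
    have h0 := hEnonneg r
    have hexp := Real.exp_pos (K * r)
    simp only [hgdef] at hgle
    nlinarith
  have : q r ^ 2 = 0 := by
    simp only [hEdef] at hE0
    nlinarith [sq_nonneg (dq r)]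
  exact pow_eq_zero_iff two_ne_zero |>.mp this

lemma ode_main {p : ℝ} (hp : 1 < p) {f q : ℝ → ℝ}
    (hfC : ContDiffOn ℝ 2 f (Ioo (-1:ℝ) 1)) (hqC : ContDiffOn ℝ 2 q (Ioo (-1:ℝ) 1))
    (hfcont : ContinuousOn f (Icc 0 1)) (hqcont : ContinuousOn q (Icc 0 1))
    (hf1 : f 1 = 0) (hq1 : q 1 = 0) (hf0 : 0 < f 0)
    (hfode : ∀ r ∈ Ioo (0:ℝ) 1,
      deriv (deriv f) r = -(deriv f r)/r - |f r| ^ (p-1) * f r)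
    (hqode : ∀ r ∈ Ioo (0:ℝ) 1,
      deriv (deriv q) r = -(deriv q r)/r - (p * |f r| ^ (p-1)) * q r) :
    ∀ t ∈ Icc (0:ℝ) 1, q t = 0 := by
  have hIoo : IsOpen (Ioo (-1:ℝ) 1) := isOpen_Ioo
  have hsub01 : Ioo (0:ℝ) 1 ⊆ Ioo (-1:ℝ) 1 := fun x hx => ⟨by linarith [hx.1], hx.2⟩
  have hfd1 : ∀ r ∈ Ioo (-1:ℝ) 1, HasDerivAt f (deriv f r) r := fun r hr =>
    ((hfC.contDiffAt (hIoo.mem_nhds hr)).differentiableAt two_ne_zero).hasDerivAt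
  have hf'C : ContDiffOn ℝ 1 (deriv f) (Ioo (-1:ℝ) 1) := hfC.deriv_of_isOpen hIoo (by norm_num)
  have hfd2 : ∀ r ∈ Ioo (-1:ℝ) 1, HasDerivAt (deriv f) (deriv (deriv f) r) r := fun r hr =>
    ((hf'C.contDiffAt (hIoo.mem_nhds hr)).differentiableAt one_ne_zero).hasDerivAt
  have hqd1 : ∀ r ∈ Ioo (-1:ℝ) 1, HasDerivAt q (deriv q r) r := fun r hr =>
    ((hqC.contDiffAt (hIoo.mem_nhds hr)).differentiableAt two_ne_zero).hasDerivAt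
  have hq'C : ContDiffOn ℝ 1 (deriv q) (Ioo (-1:ℝ) 1) := hqC.deriv_of_isOpen hIoo (by norm_num)
  have hqd2 : ∀ r ∈ Ioo (-1:ℝ) 1, HasDerivAt (deriv q) (deriv (deriv q) r) r := fun r hr =>
    ((hq'C.contDiffAt (hIoo.mem_nhds hr)).differentiableAt one_ne_zero).hasDerivAt
  have hφder : ∀ t : ℝ, HasDerivAt (fun s : ℝ => |s| ^ (p-1) * s) (p * |t| ^ (p-1)) t :=
    fun t => hasDerivAt_phi hp t
  have hφcont : Continuous (fun s : ℝ => |s| ^ (p-1) * s) :=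
    continuous_iff_continuousAt.2 fun t => (hφder t).continuousAt
  -- bound on |f|
  obtain ⟨M0, hM0⟩ := isCompact_Icc.exists_bound_of_continuousOn hfcont
  set M : ℝ := max M0 1 with hMdef
  have hM : ∀ r ∈ Icc (0:ℝ) 1, |f r| ≤ M := fun r hr =>
    le_trans (by simpa using hM0 r hr) (le_max_left _ _)
  have hM1 : (1:ℝ) ≤ M := le_max_right _ _
  have hmb : ∀ r ∈ Icc (0:ℝ) 1, |f r| ^ (p-1) ≤ M ^ (p-1) := fun r hr =>
    Real.rpow_le_rpow (abs_nonneg _) (hM r hr) (by linarith)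
  have hMp : (0:ℝ) ≤ M ^ (p-1) := Real.rpow_nonneg (by linarith) _
  -- P = r * f'
  have hPder : ∀ r ∈ Ioo (0:ℝ) 1, HasDerivAt (fun s => s * deriv f s)
      (-(r * (|f r| ^ (p-1) * f r))) r := by
    intro r hr
    have h1 := (hasDerivAt_id r).mul (hfd2 r (hsub01 hr))
    have h2 : 1 * deriv f r + id r * deriv (deriv f) r = -(r * (|f r| ^ (p-1) * f r)) := by
      rw [hfode r hr, id_eq]
      have hrne : r ≠ 0 := ne_of_gt hr.1
      field_simp
      ring
    rw [← h2]
    exact h1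
  -- continuity of f' on Ioo(-1,1) and of integrand
  have hf'cont : ContinuousOn (deriv f) (Ioo (-1:ℝ) 1) := hf'C.continuousOn
  have hq'cont : ContinuousOn (deriv q) (Ioo (-1:ℝ) 1) := hq'C.continuousOn
  -- the primitive
  have hGcont : ContinuousOn (fun s : ℝ => -(s * (|f s| ^ (p-1) * f s))) (Icc 0 1) := by
    apply ContinuousOn.neg
    exact (continuousOn_id.mul (hφcont.comp_continuousOn hfcont))
  have half : (1:ℝ)/2 ∈ Ioo (0:ℝ) 1 := by norm_num
  have hint : IntegrableOn (fun s : ℝ => -(s * (|f s| ^ (p-1) * f s))) (uIcc (1/2 : ℝ) 1) := by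
    apply ContinuousOn.integrableOn_compact isCompact_uIcc
    apply hGcont.mono
    rw [uIcc_of_le (by norm_num : (1:ℝ)/2 ≤ 1)]
    exact Icc_subset_Icc (by norm_num) le_rfl
  set Φ : ℝ → ℝ := fun r => (1/2 : ℝ) * deriv f (1/2)
      + ∫ s in (1/2 : ℝ)..r, -(s * (|f s| ^ (p-1) * f s)) with hΦdef
  have hΦcont : ContinuousOn Φ (uIcc (1/2 : ℝ) 1) := by
    apply ContinuousOn.add continuousOn_const
    exact intervalIntegral.continuousOn_primitive_interval' hint.intervalIntegrable left_mem_uIcc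
  have hPΦ : ∀ r ∈ Ico (1/2 : ℝ) 1, r * deriv f r = Φ r := by
    intro r hr
    have hle : (1/2:ℝ) ≤ r := hr.1
    have huIcc : uIcc (1/2:ℝ) r = Icc (1/2:ℝ) r := uIcc_of_le hle
    have hFTC : ∫ s in (1/2 : ℝ)..r, -(s * (|f s| ^ (p-1) * f s))
        = r * deriv f r - (1/2 : ℝ) * deriv f (1/2) := by
      apply intervalIntegral.integral_eq_sub_of_hasDerivAt
      · intro s hs
        rw [huIcc] at hs
        exact hPder s ⟨lt_of_lt_of_le (by norm_num) hs.1, lt_of_le_of_lt hs.2 hr.2⟩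
      · apply ContinuousOn.intervalIntegrable
        apply hGcont.mono
        rw [huIcc]
        exact Icc_subset_Icc (by norm_num) hr.2.le
    simp only [hΦdef]
    rw [hFTC]
    ring
  set L : ℝ := Φ 1 with hLdef
  have hIcoMem : Ico (1/2:ℝ) 1 ∈ 𝓝[<] (1:ℝ) :=
    mem_of_superset (Ioo_mem_nhdsLT (by norm_num)) Ioo_subset_Ico_self
  have hPlim : Tendsto (fun r => r * deriv f r) (𝓝[<] (1:ℝ)) (𝓝 L) := by
    have h1 : Tendsto Φ (𝓝[<] (1:ℝ)) (𝓝 L) := by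
      have hcw : ContinuousWithinAt Φ (uIcc (1/2:ℝ) 1) 1 := hΦcont 1 right_mem_uIcc
      have hle : 𝓝[<] (1:ℝ) ≤ 𝓝[uIcc (1/2:ℝ) 1] (1:ℝ) := by
        apply nhdsWithin_le_of_mem
        rw [uIcc_of_le (by norm_num : (1:ℝ)/2 ≤ 1)]
        exact mem_of_superset hIcoMem Ico_subset_Icc_self
      exact hcw.tendsto.mono_left hle
    apply Tendsto.congr' _ h1
    filter_upwards [hIcoMem] with r hr
    exact (hPΦ r hr).symm
  have hf'lim : Tendsto (deriv f) (𝓝[<] (1:ℝ)) (𝓝 L) := by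
    have hid : Tendsto (fun r : ℝ => r) (𝓝[<] (1:ℝ)) (𝓝 1) :=
      tendsto_id.mono_right nhdsWithin_le_nhds
    have hdiv := hPlim.div hid one_ne_zero
    have heq : (fun r => (r * deriv f r) / r) =ᶠ[𝓝[<] (1:ℝ)] deriv f := by
      filter_upwards [hIcoMem] with r hr
      have : r ≠ 0 := by have := hr.1; intro h; rw [h] at this; norm_num at this
      field_simp
    have := Tendsto.congr' heq hdiv
    simpa using this
  have hftends : Tendsto f (𝓝[<] (1:ℝ)) (𝓝 0) := by
    have hcw : ContinuousWithinAt f (Icc 0 1) 1 := hfcont 1 (by norm_num)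
    have hle : 𝓝[<] (1:ℝ) ≤ 𝓝[Icc (0:ℝ) 1] (1:ℝ) := nhdsWithin_le_of_mem
      (mem_of_superset hIcoMem (Ico_subset_Icc_self.trans (Icc_subset_Icc (by norm_num) le_rfl)))
    simpa [hf1] using hcw.tendsto.mono_left hle
  have hqtends : Tendsto q (𝓝[<] (1:ℝ)) (𝓝 0) := by
    have hcw : ContinuousWithinAt q (Icc 0 1) 1 := hqcont 1 (by norm_num)
    have hle : 𝓝[<] (1:ℝ) ≤ 𝓝[Icc (0:ℝ) 1] (1:ℝ) := nhdsWithin_le_of_mem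
      (mem_of_superset hIcoMem (Ico_subset_Icc_self.trans (Icc_subset_Icc (by norm_num) le_rfl)))
    simpa [hq1] using hcw.tendsto.mono_left hle
  -- L ≠ 0
  have hL : L ≠ 0 := by
    intro hL0
    have hElim : Tendsto (fun r => f r ^ 2 + deriv f r ^ 2) (𝓝[<] (1:ℝ)) (𝓝 0) := by
      have := (hftends.pow 2).add ((hL0 ▸ hf'lim).pow 2)
      simpa using this
    have hfzero : ∀ r ∈ Ioo (0:ℝ) 1, f r = 0 := by
      intro r hr
      refine backward_unique (a := r) (b := 1) (C := M ^ (p-1))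
        (m := fun s => |f s| ^ (p-1)) hr.1 hMp ?_ ?_ ?_ hElim r ⟨le_rfl, hr.2⟩
      · intro x hx
        exact hfd1 x (hsub01 ⟨lt_of_lt_of_le hr.1 hx.1, hx.2⟩)
      · intro x hx
        have hx01 : x ∈ Ioo (0:ℝ) 1 := ⟨lt_of_lt_of_le hr.1 hx.1, hx.2⟩
        exact hfode x hx01 ▸ hfd2 x (hsub01 hx01)
      · intro x hx
        have hx01 : x ∈ Ioo (0:ℝ) 1 := ⟨lt_of_lt_of_le hr.1 hx.1, hx.2⟩
        rw [abs_of_nonneg (Real.rpow_nonneg (abs_nonneg _) _)]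
        exact hmb x ⟨hx01.1.le, hx01.2.le⟩
    have hc : ContinuousAt f 0 :=
      ((hfC.contDiffAt (hIoo.mem_nhds (by norm_num))).differentiableAt two_ne_zero).continuousAt
    have h1 : Tendsto f (𝓝[>] (0:ℝ)) (𝓝 (f 0)) := hc.tendsto.mono_left nhdsWithin_le_nhds
    have hev : f =ᶠ[𝓝[>] (0:ℝ)] fun _ => 0 := by
      filter_upwards [Ioo_mem_nhdsGT zero_lt_one] with x hx using hfzero x hx
    have : f 0 = 0 := tendsto_nhds_unique (Tendsto.congr' hev h1) tendsto_const_nhds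
    linarith
  -- the auxiliary solution w of the linearized equation
  set w : ℝ → ℝ := fun s => s * deriv f s + 2/(p-1) * f s with hwdef
  set w' : ℝ → ℝ := fun s => 2/(p-1) * deriv f s - s * (|f s| ^ (p-1) * f s) with hw'def
  have hpne : p - 1 ≠ 0 := by intro h; rw [sub_eq_zero] at h; exact absurd h (ne_of_gt hp)
  have hwder : ∀ r ∈ Ioo (0:ℝ) 1, HasDerivAt w (w' r) r := by
    intro r hr
    have h1 := ((hasDerivAt_id r).mul (hfd2 r (hsub01 hr))).add
      ((hfd1 r (hsub01 hr)).const_mul (2/(p-1)))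
    simp only [hwdef, hw'def]
    refine h1.congr_deriv (Eq.symm ?_)
    rw [hfode r hr, id_eq]
    have hrne : r ≠ 0 := ne_of_gt hr.1
    field_simp
    ring
  have hw'der : ∀ r ∈ Ioo (0:ℝ) 1, HasDerivAt w'
      (-(w' r)/r - (p * |f r| ^ (p-1)) * w r) r := by
    intro r hr
    have hcomp : HasDerivAt (fun s => |f s| ^ (p-1) * f s)
        (p * |f r| ^ (p-1) * deriv f r) r :=
      (hφder (f r)).comp r (hfd1 r (hsub01 hr))
    have h1 := ((hfd2 r (hsub01 hr)).const_mul (2/(p-1))).sub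
      ((hasDerivAt_id r).mul hcomp)
    simp only [hwdef, hw'def]
    refine h1.congr_deriv (Eq.symm ?_)
    rw [hfode r hr, id_eq]
    have hrne : r ≠ 0 := ne_of_gt hr.1
    field_simp
    ring
  -- the Wronskian
  set W : ℝ → ℝ := fun s => s * (q s * w' s - w s * deriv q s) with hWdef
  have hWder : ∀ r ∈ Ioo (0:ℝ) 1, HasDerivAt W 0 r := by
    intro r hr
    have hinner := ((hqd1 r (hsub01 hr)).mul (hw'der r hr)).sub
      ((hwder r hr).mul (hqd2 r (hsub01 hr)))
    have h1 := (hasDerivAt_id r).mul hinner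
    simp only [hWdef]
    refine h1.congr_deriv (Eq.symm ?_)
    rw [hqode r hr]
    simp only [id_eq, Pi.sub_apply, Pi.mul_apply]
    have hrne : r ≠ 0 := ne_of_gt hr.1
    field_simp
    ring
  have hWtend : Tendsto W (𝓝[>] (0:ℝ)) (𝓝 0) := by
    have hmem0 : (0:ℝ) ∈ Ioo (-1:ℝ) 1 := by norm_num
    have c1 : ContinuousAt f 0 :=
      ((hfC.contDiffAt (hIoo.mem_nhds hmem0)).differentiableAt two_ne_zero).continuousAt
    have c2 : ContinuousAt (deriv f) 0 := hf'cont.continuousAt (hIoo.mem_nhds hmem0)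
    have c3 : ContinuousAt q 0 :=
      ((hqC.contDiffAt (hIoo.mem_nhds hmem0)).differentiableAt two_ne_zero).continuousAt
    have c4 : ContinuousAt (deriv q) 0 := hq'cont.continuousAt (hIoo.mem_nhds hmem0)
    have cphi : ContinuousAt (fun s : ℝ => |f s| ^ (p-1) * f s) 0 := hφcont.continuousAt.comp c1
    have cw : ContinuousAt w 0 := by
      simp only [hwdef]
      exact (continuousAt_id.mul c2).add (continuousAt_const.mul c1)
    have cw' : ContinuousAt w' 0 := by
      simp only [hw'def]
      exact (continuousAt_const.mul c2).sub (continuousAt_id.mul cphi)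
    have cW : ContinuousAt W 0 := by
      simp only [hWdef]
      exact continuousAt_id.mul ((c3.mul cw').sub (cw.mul c4))
    have hW00 : W 0 = 0 := by simp [hWdef]
    have h2 : Tendsto W (𝓝[>] (0:ℝ)) (𝓝 (W 0)) := cW.tendsto.mono_left nhdsWithin_le_nhds
    rwa [hW00] at h2
  have hW0 : ∀ r ∈ Ioo (0:ℝ) 1, W r = 0 := by
    intro r hr
    have hconst := const_on_Ioo hWder
    have hev : W =ᶠ[𝓝[>] (0:ℝ)] fun _ => W r := by
      filter_upwards [Ioo_mem_nhdsGT hr.1] with x hx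
      exact hconst x ⟨hx.1, hx.2.trans hr.2⟩ r hr
    exact (tendsto_nhds_unique (Tendsto.congr' hev hWtend) tendsto_const_nhds).symm
  have hwlim : Tendsto w (𝓝[<] (1:ℝ)) (𝓝 L) := by
    have := hPlim.add (hftends.const_mul (2/(p-1)))
    simp only [hwdef]
    simpa using this
  have hwne : ∀ᶠ r in 𝓝[<] (1:ℝ), w r ≠ 0 := hwlim.eventually_ne hL
  obtain ⟨s0, hs0lt, hs0⟩ := mem_nhdsLT_iff_exists_Ioo_subset.mp hwne
  set s1 : ℝ := max s0 0 with hs1def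
  have hs1lt : s1 < 1 := max_lt hs0lt zero_lt_one
  have hs1sub : Ioo s1 1 ⊆ Ioo (0:ℝ) 1 := fun x hx =>
    ⟨lt_of_le_of_lt (le_max_right s0 0) hx.1, hx.2⟩
  have hs1ne : ∀ x ∈ Ioo s1 1, w x ≠ 0 := fun x hx =>
    hs0 ⟨lt_of_le_of_lt (le_max_left s0 0) hx.1, hx.2⟩
  have hQder : ∀ r ∈ Ioo s1 1, HasDerivAt (fun x => q x / w x) 0 r := by
    intro r hr
    have hr01 := hs1sub hr
    have hdiv := (hqd1 r (hsub01 hr01)).div (hwder r hr01) (hs1ne r hr)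
    have hrne : r ≠ 0 := ne_of_gt hr01.1
    have hinner : q r * w' r - w r * deriv q r = 0 := by
      have hW := hW0 r hr01
      simp only [hWdef] at hW
      rcases mul_eq_zero.mp hW with h | h
      · exact absurd h hrne
      · exact h
    have hval : (deriv q r * w r - q r * w' r) / w r ^ 2 = 0 := by
      have hnum : deriv q r * w r - q r * w' r = 0 := by linarith
      rw [hnum, zero_div]
    rw [← hval]
    exact hdiv
  have hQconst := const_on_Ioo hQder
  have hQlim : Tendsto (fun x => q x / w x) (𝓝[<] (1:ℝ)) (𝓝 0) := by
    have := hqtends.div hwlim hL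
    rwa [zero_div] at this
  have hqzero1 : ∀ r ∈ Ioo s1 1, q r = 0 := by
    intro r hr
    have hev : (fun x => q x / w x) =ᶠ[𝓝[<] (1:ℝ)] fun _ => q r / w r := by
      filter_upwards [Ioo_mem_nhdsLT hs1lt] with x hx
      exact hQconst x hx r hr
    have h0 : q r / w r = 0 :=
      (tendsto_nhds_unique (Tendsto.congr' hev hQlim) tendsto_const_nhds).symm
    rcases div_eq_zero_iff.mp h0 with h | h
    · exact h
    · exact absurd h (hs1ne r hr)
  set rstar : ℝ := (s1 + 1)/2 with hrstardef
  have hrstar : rstar ∈ Ioo s1 1 := ⟨by simp only [hrstardef]; linarith, by simp only [hrstardef]; linarith⟩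
  have hrstar01 : rstar ∈ Ioo (0:ℝ) 1 := hs1sub hrstar
  have hq'rstar : deriv q rstar = 0 := by
    have hev : q =ᶠ[𝓝 rstar] fun _ => 0 := by
      filter_upwards [isOpen_Ioo.mem_nhds hrstar] with x hx using hqzero1 x hx
    rw [hev.deriv_eq]
    exact deriv_const rstar 0
  have hqrstar : q rstar = 0 := hqzero1 _ hrstar
  have hEq : Tendsto (fun r => q r ^ 2 + deriv q r ^ 2) (𝓝[<] rstar) (𝓝 0) := by
    have c3 : ContinuousAt q rstar :=
      ((hqC.contDiffAt (hIoo.mem_nhds (hsub01 hrstar01))).differentiableAt two_ne_zero).continuousAt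
    have c4 : ContinuousAt (deriv q) rstar := hq'cont.continuousAt (hIoo.mem_nhds (hsub01 hrstar01))
    have hc : ContinuousAt (fun r => q r ^ 2 + deriv q r ^ 2) rstar := (c3.pow 2).add (c4.pow 2)
    have h2 : Tendsto (fun r => q r ^ 2 + deriv q r ^ 2) (𝓝[<] rstar)
        (𝓝 (q rstar ^ 2 + deriv q rstar ^ 2)) := hc.tendsto.mono_left nhdsWithin_le_nhds
    simpa [hqrstar, hq'rstar] using h2
  have hp0 : (0:ℝ) < p := by linarith
  have hqzero2 : ∀ r ∈ Ioo (0:ℝ) 1, r < rstar → q r = 0 := by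
    intro r hr hrr
    refine backward_unique (a := r) (b := rstar) (C := p * M ^ (p-1))
      (m := fun s => p * |f s| ^ (p-1)) hr.1 (mul_nonneg hp0.le hMp) ?_ ?_ ?_ hEq r ⟨le_rfl, hrr⟩
    · intro x hx
      exact hqd1 x (hsub01 ⟨lt_of_lt_of_le hr.1 hx.1, hx.2.trans hrstar01.2⟩)
    · intro x hx
      have hx01 : x ∈ Ioo (0:ℝ) 1 := ⟨lt_of_lt_of_le hr.1 hx.1, hx.2.trans hrstar01.2⟩
      exact hqode x hx01 ▸ hqd2 x (hsub01 hx01)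
    · intro x hx
      have hx01 : x ∈ Ioo (0:ℝ) 1 := ⟨lt_of_lt_of_le hr.1 hx.1, hx.2.trans hrstar01.2⟩
      rw [abs_of_nonneg (mul_nonneg hp0.le (Real.rpow_nonneg (abs_nonneg _) _))]
      exact mul_le_mul_of_nonneg_left (hmb x ⟨hx01.1.le, hx01.2.le⟩) hp0.le
  have hqzero : ∀ r ∈ Ioo (0:ℝ) 1, q r = 0 := by
    intro r hr
    rcases lt_or_ge r rstar with h | h
    · exact hqzero2 r hr h
    · exact hqzero1 r ⟨lt_of_lt_of_le hrstar.1 h, hr.2⟩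
  have hq0 : q 0 = 0 := by
    have hc : ContinuousAt q 0 :=
      ((hqC.contDiffAt (hIoo.mem_nhds (by norm_num))).differentiableAt two_ne_zero).continuousAt
    have h1 : Tendsto q (𝓝[>] (0:ℝ)) (𝓝 (q 0)) := hc.tendsto.mono_left nhdsWithin_le_nhds
    have hev : q =ᶠ[𝓝[>] (0:ℝ)] fun _ => 0 := by
      filter_upwards [Ioo_mem_nhdsGT zero_lt_one] with x hx using hqzero x hx
    exact tendsto_nhds_unique (Tendsto.congr' hev h1) tendsto_const_nhds
  intro t ht
  rcases eq_or_lt_of_le ht.1 with h0 | h0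
  · rw [← h0]; exact hq0
  rcases eq_or_lt_of_le ht.2 with h1' | h1'
  · rw [h1']; exact hq1
  · exact hqzero t ⟨h0, h1'⟩

end RadialAux

theorem radially_nondegenerate (p : ℝ) (hp : 1 < p) (u : Plane → ℝ)
    (hu : IsRadialNodalSol p u) (v : Plane → ℝ) (hv : IsLinearizedSol p u v)
    (hrad : IsRadial v) : ∀ x ∈ closure unitBall, v x = 0 := by
  obtain ⟨husol, hurad, _, hu0⟩ := hu
  obtain ⟨hvsmooth, hvcont, hveqn, hvbdry⟩ := hv
  set f : ℝ → ℝ := fun t => u (t • RadialAux.E0) with hfdef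
  set q : ℝ → ℝ := fun t => v (t • RadialAux.E0) with hqdef
  have hclosure : closure unitBall = Metric.closedBall (0:Plane) 1 := closure_ball 0 one_ne_zero
  have hfrontier : frontier unitBall = Metric.sphere (0:Plane) 1 := frontier_ball 0 one_ne_zero
  have hE0front : RadialAux.E0 ∈ frontier unitBall := by
    rw [hfrontier, mem_sphere_zero_iff_norm]; exact RadialAux.norm_E0
  have hlineC : Continuous (fun t : ℝ => t • RadialAux.E0) := by fun_prop
  have hmapsIcc : MapsTo (fun t : ℝ => t • RadialAux.E0) (Icc (0:ℝ) 1) (closure unitBall) := by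
    intro t ht
    rw [hclosure, Metric.mem_closedBall, dist_zero_right, RadialAux.norm_smul_E0,
      abs_of_nonneg ht.1]
    exact ht.2
  have hmapsIoo : MapsTo (fun t : ℝ => t • RadialAux.E0) (Ioo (-1:ℝ) 1) unitBall := fun t ht =>
    RadialAux.mem_unitBall (abs_lt.2 ⟨ht.1, ht.2⟩)
  have hlC2 : ContDiff ℝ 2 (fun t : ℝ => t • RadialAux.E0) := contDiff_id.smul contDiff_const
  have hfC : ContDiffOn ℝ 2 f (Ioo (-1:ℝ) 1) := husol.smooth.comp hlC2.contDiffOn hmapsIoo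
  have hqC : ContDiffOn ℝ 2 q (Ioo (-1:ℝ) 1) := hvsmooth.comp hlC2.contDiffOn hmapsIoo
  have hfcont : ContinuousOn f (Icc 0 1) := husol.cont.comp hlineC.continuousOn hmapsIcc
  have hqcont : ContinuousOn q (Icc 0 1) := hvcont.comp hlineC.continuousOn hmapsIcc
  have hf1 : f 1 = 0 := by
    simp only [hfdef, one_smul]; exact husol.bdry _ hE0front
  have hq1 : q 1 = 0 := by
    simp only [hqdef, one_smul]; exact hvbdry _ hE0front
  have hf0 : 0 < f 0 := by
    simp only [hfdef, zero_smul]; exact hu0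
  have hfode : ∀ r ∈ Ioo (0:ℝ) 1,
      deriv (deriv f) r = -(deriv f r)/r - |f r| ^ (p-1) * f r := by
    intro r hr
    exact RadialAux.ode_of_solution (c := fun x => |u x| ^ (p-1)) husol.smooth hurad
      (fun x hx => husol.eqn x hx) hr.1 hr.2
  have hqode : ∀ r ∈ Ioo (0:ℝ) 1,
      deriv (deriv q) r = -(deriv q r)/r - (p * |f r| ^ (p-1)) * q r := by
    intro r hr
    exact RadialAux.ode_of_solution (c := fun x => p * |u x| ^ (p-1)) hvsmooth hrad
      (fun x hx => hveqn x hx) hr.1 hr.2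
  have hqzero := RadialAux.ode_main hp hfC hqC hfcont hqcont hf1 hq1 hf0 hfode hqode
  intro x hx
  have hxnorm : ‖x‖ ≤ 1 := by
    rw [hclosure, Metric.mem_closedBall, dist_zero_right] at hx; exact hx
  have hxq : v x = q ‖x‖ := by
    apply hrad
    rw [RadialAux.norm_smul_E0, abs_of_nonneg (norm_nonneg x)]
  rw [hxq]
  exact hqzero _ ⟨norm_nonneg x, hxnorm⟩

end
end
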